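/- In the linear Gaussian structural equation model D = ε_D, T = w₁D + ε_T, C = w₂D + ε_C, Y = w₃T + w₄C + ε_Y with ε_D, ε_T, ε_C, ε_Y independent centered Gaussians, the counterfactual variable Y(C=∅) = Y − w₄C is conditionally independent of the pair (D, C) given T. In particular, the conditional law of Y − w₄C given T does not depend on D, C, or the weight w₂. -/

import Mathlib

open MeasureTheory ProbabilityTheory
open scoped NNReal

variable {Ω : Type*}

/-- `D = ε_D` in the linear Gaussian SEM (noise variables `ε 0, ε 1, ε 2, ε 3`
play the roles of `ε_D, ε_T, ε_C, ε_Y`). -/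
def semD (ε : Fin 4 → Ω → ℝ) : Ω → ℝ := ε 0

/-- `T = w₁ D + ε_T`. -/
def semT (w₁ : ℝ) (ε : Fin 4 → Ω → ℝ) : Ω → ℝ :=
  fun ω => w₁ * semD ε ω + ε 1 ω

/-- `C = w₂ D + ε_C`. -/
def semC (w₂ : ℝ) (ε : Fin 4 → Ω → ℝ) : Ω → ℝ :=
  fun ω => w₂ * semD ε ω + ε 2 ω

/-- `Y = w₃ T + w₄ C + ε_Y`. -/
def semY (w₁ w₂ w₃ w₄ : ℝ) (ε : Fin 4 → Ω → ℝ) : Ω → ℝ :=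
  fun ω => w₃ * semT w₁ ε ω + w₄ * semC w₂ ε ω + ε 3 ω

/-- The intermediate counterfactual `Y(C=∅) = w₃ T + ε_Y` of the node-split
system. -/
def semYcf (w₁ w₃ : ℝ) (ε : Fin 4 → Ω → ℝ) : Ω → ℝ :=
  fun ω => w₃ * semT w₁ ε ω + ε 3 ω

/-- The exogenous noises `ε_D, ε_T, ε_C, ε_Y` are independent centered Gaussian
random variables with variances `σ2 0, σ2 1, σ2 2, σ2 3`. -/
def IndepGaussianNoise [MeasurableSpace Ω] (μ : Measure Ω) (σ2 : Fin 4 → ℝ≥0)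
    (ε : Fin 4 → Ω → ℝ) : Prop :=
  (∀ i, Measurable (ε i)) ∧
  iIndepFun ε μ ∧
  (∀ i, μ.map (ε i) = gaussianReal 0 (σ2 i))

lemma condexp_indicator_inter_of_indep' {Ω : Type*} {m G H : MeasurableSpace Ω}
    [mΩ : MeasurableSpace Ω] {μ : Measure Ω} [IsProbabilityMeasure μ]
    (hm : m ≤ G) (hG : G ≤ mΩ) (hH : H ≤ mΩ)
    (hind : ProbabilityTheory.Indep H G μ)
    {A B : Set Ω} (hA : MeasurableSet[H] A) (hB : MeasurableSet[G] B) :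
    (μ⟦A ∩ B | m⟧) =ᵐ[μ] fun ω => (μ A).toReal * (μ⟦B | m⟧) ω := by
  have hmle : m ≤ mΩ := hm.trans hG
  have hA0 : MeasurableSet[mΩ] A := hH _ hA
  have hB0 : MeasurableSet[mΩ] B := hG _ hB
  have hBint : Integrable (B.indicator fun _ => (1 : ℝ)) μ :=
    (integrable_const 1).indicator hB0
  have hABint : Integrable ((A ∩ B).indicator fun _ => (1 : ℝ)) μ :=
    (integrable_const 1).indicator (hA0.inter hB0)
  refine (ae_eq_condExp_of_forall_setIntegral_eq hmle hABint ?_ ?_ ?_).symm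
  · intro s _ _
    exact (integrable_condExp.const_mul _).integrableOn
  · intro s hs hμs
    have hs0 : MeasurableSet[mΩ] s := hmle _ hs
    have h1 : ∫ x in s, (A ∩ B).indicator (fun _ => (1 : ℝ)) x ∂μ
        = (μ (A ∩ (B ∩ s))).toReal := by
      rw [setIntegral_indicator (hA0.inter hB0), setIntegral_const, smul_eq_mul, mul_one,
        Set.inter_comm s, Set.inter_assoc, measureReal_def]
    have h2 : ∫ x in s, (μ A).toReal * (μ⟦B | m⟧) x ∂μ
        = (μ A).toReal * (μ (B ∩ s)).toReal := by
      rw [integral_const_mul, setIntegral_condExp hmle hBint hs,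
        setIntegral_indicator hB0, setIntegral_const, smul_eq_mul, mul_one, Set.inter_comm s, measureReal_def]
    rw [h1, h2, (Indep_iff _ _ _).1 hind A (B ∩ s) hA (hB.inter (hm _ hs)),
      ENNReal.toReal_mul]
  · exact (stronglyMeasurable_condExp.aestronglyMeasurable :
      AEStronglyMeasurable[m] (μ⟦B | m⟧) μ).const_smul ((μ A).toReal)

lemma condIndep_sup_of_indep' {Ω : Type*} {m G H : MeasurableSpace Ω}
    [mΩ : MeasurableSpace Ω] [StandardBorelSpace Ω]
    {μ : Measure Ω} [IsProbabilityMeasure μ]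
    (hm : m ≤ G) (hG : G ≤ mΩ) (hH : H ≤ mΩ)
    (hind : ProbabilityTheory.Indep H G μ) :
    ProbabilityTheory.CondIndep m (m ⊔ H) G (hm.trans hG) μ := by
  have hmle : m ≤ mΩ := hm.trans hG
  set p1 : Set (Set Ω) :=
    {s | ∃ s₁ s₂, MeasurableSet[m] s₁ ∧ MeasurableSet[H] s₂ ∧ s = s₁ ∩ s₂} with hp1def
  have hgen1 : m ⊔ H = MeasurableSpace.generateFrom p1 := by
    refine le_antisymm (sup_le ?_ ?_) (MeasurableSpace.generateFrom_le ?_)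
    · intro s hs
      exact MeasurableSpace.measurableSet_generateFrom
        ⟨s, Set.univ, hs, MeasurableSet.univ, (Set.inter_univ s).symm⟩
    · intro s hs
      exact MeasurableSpace.measurableSet_generateFrom
        ⟨Set.univ, s, MeasurableSet.univ, hs, (Set.univ_inter s).symm⟩
    · rintro s ⟨s₁, s₂, h₁, h₂, rfl⟩
      exact ((le_sup_left : m ≤ m ⊔ H) _ h₁).inter ((le_sup_right : H ≤ m ⊔ H) _ h₂)
  have hp1 : IsPiSystem p1 := by
    rintro s ⟨s₁, s₂, h₁, h₂, rfl⟩ t ⟨t₁, t₂, h₃, h₄, rfl⟩ -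
    refine ⟨s₁ ∩ t₁, s₂ ∩ t₂, h₁.inter h₃, h₂.inter h₄, ?_⟩
    ext ω; simp only [Set.mem_inter_iff]; tauto
  have hp2 : IsPiSystem {s : Set Ω | MeasurableSet[G] s} := by
    rintro s hs t ht -
    exact @MeasurableSet.inter Ω G _ _ hs ht
  refine CondIndepSets.condIndep (sup_le hmle hH) hG hp1 hp2 hgen1
    (@MeasurableSpace.generateFrom_measurableSet Ω G).symm ?_
  rw [condIndepSets_iff _ _ _ _ ?_ ?_]
  rotate_left
  · rintro s ⟨s₁, s₂, h₁, h₂, rfl⟩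
    exact (hmle _ h₁).inter (hH _ h₂)
  · exact fun s hs => hG _ hs
  rintro t1 B ⟨A₁, A₂, hA₁, hA₂, rfl⟩ hB
  have key := condexp_indicator_inter_of_indep' hm hG hH hind hA₂ hB
  have keyu := condexp_indicator_inter_of_indep' hm hG hH hind hA₂
    (MeasurableSet.univ : MeasurableSet[G] Set.univ)
  rw [Set.inter_univ] at keyu
  have hunivconst : (μ⟦(Set.univ : Set Ω) | m⟧) =ᵐ[μ] fun _ => (1 : ℝ) := by
    rw [Set.indicator_univ]
    exact Filter.EventuallyEq.of_eq (condExp_const (μ := μ) hmle (1:ℝ))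
  have hA₂const : (μ⟦A₂ | m⟧) =ᵐ[μ] fun _ => (μ A₂).toReal := by
    filter_upwards [keyu, hunivconst] with ω h1 h2
    rw [h1, h2, mul_one]
  -- rewrite indicators
  have e1 : Set.indicator ((A₁ ∩ A₂) ∩ B) (fun _ => (1:ℝ))
      = Set.indicator A₁ (Set.indicator (A₂ ∩ B) (fun _ => (1:ℝ))) := by
    rw [Set.indicator_indicator, Set.inter_assoc]
  have e2 : Set.indicator (A₁ ∩ A₂) (fun _ => (1:ℝ))
      = Set.indicator A₁ (Set.indicator A₂ (fun _ => (1:ℝ))) := by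
    rw [Set.indicator_indicator]
  have hint1 : Integrable (Set.indicator (A₂ ∩ B) (fun _ => (1:ℝ))) μ :=
    (integrable_const 1).indicator ((hH _ hA₂).inter (hG _ hB))
  have hint2 : Integrable (Set.indicator A₂ (fun _ => (1:ℝ))) μ :=
    (integrable_const 1).indicator (hH _ hA₂)
  have c1 := condExp_indicator (m := m) (μ := μ) hint1 hA₁
  have c2 := condExp_indicator (m := m) (μ := μ) hint2 hA₁
  calc (μ⟦(A₁ ∩ A₂) ∩ B | m⟧)
      = μ[Set.indicator A₁ (Set.indicator (A₂ ∩ B) fun _ => (1:ℝ)) | m] := by rw [← e1]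
    _ =ᵐ[μ] Set.indicator A₁ (μ⟦A₂ ∩ B | m⟧) := c1
    _ =ᵐ[μ] (μ⟦A₁ ∩ A₂ | m⟧) * (μ⟦B | m⟧) := by
        have c2' : (μ⟦A₁ ∩ A₂ | m⟧) =ᵐ[μ] Set.indicator A₁ (μ⟦A₂ | m⟧) := by
          rw [e2]; exact c2
        filter_upwards [key, c2', hA₂const] with ω hkey hc2 hconst
        simp only [Pi.mul_apply, hc2]
        by_cases hω : ω ∈ A₁
        · simp only [Set.indicator_of_mem hω, hkey, hconst]
        · simp only [Set.indicator_of_notMem hω, zero_mul]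

lemma condIndepFun_of_measurable_sup {Ω : Type*} {m G H : MeasurableSpace Ω}
    [mΩ : MeasurableSpace Ω] [StandardBorelSpace Ω]
    {μ : Measure Ω} [IsProbabilityMeasure μ]
    (hm : m ≤ G) (hG : G ≤ mΩ) (hH : H ≤ mΩ)
    (hind : ProbabilityTheory.Indep H G μ)
    {β γ : Type*} [MeasurableSpace β] [MeasurableSpace γ]
    {f : Ω → β} {g : Ω → γ} (hf : Measurable[m ⊔ H] f) (hg : Measurable[G] g)
    (hmle : m ≤ mΩ) :
    ProbabilityTheory.CondIndepFun m hmle f g μ := by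
  rw [condIndepFun_iff_condIndep]
  exact condIndep_of_condIndep_of_le_right
    (condIndep_of_condIndep_of_le_left (condIndep_sup_of_indep' hm hG hH hind)
      (Measurable.comap_le hf))
    (Measurable.comap_le hg)

/-- In the linear Gaussian SEM `D = ε_D`, `T = w₁D + ε_T`,
`C = w₂D + ε_C`, `Y = w₃T + w₄C + ε_Y` with independent centered Gaussian
noises, the counterfactual variable `Y(C=∅) = Y − w₄C` is conditionally
independent of the pair `(D, C)` given `T` (in the standard measure-theoretic
sense). -/
theorem counterfactual_condIndep_of_DC_given_T
    {Ω : Type*} [MeasurableSpace Ω] [StandardBorelSpace Ω] [Nonempty Ω]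
    {μ : Measure Ω} [IsProbabilityMeasure μ]
    (w₁ w₂ w₃ w₄ : ℝ) (σ2 : Fin 4 → ℝ≥0) (hσ2 : ∀ i, 0 < σ2 i)
    (ε : Fin 4 → Ω → ℝ) (hε : IndepGaussianNoise μ σ2 ε) :
    CondIndepFun (MeasurableSpace.comap (semT w₁ ε) inferInstance)
      (Measurable.comap_le (((hε.1 0).const_mul w₁).add (hε.1 1)))
      (fun ω => semY w₁ w₂ w₃ w₄ ε ω - w₄ * semC w₂ ε ω)
      (fun ω => (semD ε ω, semC w₂ ε ω)) μ := by
  have hfeq : (fun ω => semY w₁ w₂ w₃ w₄ ε ω - w₄ * semC w₂ ε ω)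
      = (fun ω => w₃ * semT w₁ ε ω + ε 3 ω) := by
    funext ω; simp only [semY, semC, semT, semD]; ring
  refine condIndepFun_of_measurable_sup
    (G := (MeasurableSpace.comap (ε 0) inferInstance
        ⊔ MeasurableSpace.comap (ε 1) inferInstance)
        ⊔ MeasurableSpace.comap (ε 2) inferInstance)
    (H := MeasurableSpace.comap (ε 3) inferInstance)
    ?_ ?_ ?_ ?_ ?_ ?_ _
  · refine Measurable.comap_le (f := semT w₁ ε) ?_
    show Measurable[(MeasurableSpace.comap (ε 0) inferInstance
        ⊔ MeasurableSpace.comap (ε 1) inferInstance)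
        ⊔ MeasurableSpace.comap (ε 2) inferInstance] fun ω => w₁ * ε 0 ω + ε 1 ω
    exact (((measurable_iff_comap_le.mpr (le_sup_left.trans le_sup_left)).const_mul w₁).add
        (measurable_iff_comap_le.mpr (le_sup_right.trans le_sup_left)))
  · exact sup_le (sup_le (Measurable.comap_le (hε.1 0)) (Measurable.comap_le (hε.1 1)))
      (Measurable.comap_le (hε.1 2))
  · exact Measurable.comap_le (hε.1 3)
  · have hiI : iIndep (fun i => MeasurableSpace.comap (ε i) inferInstance) μ :=
      (iIndepFun_iff_iIndep _ _ _).mp hε.2.1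
    have hdisj : Disjoint ({3} : Set (Fin 4)) ({0, 1, 2} : Set (Fin 4)) := by
      simp [Set.disjoint_left]
    have h := indep_iSup_of_disjoint (fun i => Measurable.comap_le (hε.1 i)) hiI hdisj
    have e1 : (⨆ i ∈ ({3} : Set (Fin 4)), MeasurableSpace.comap (ε i) Real.measurableSpace)
        = MeasurableSpace.comap (ε 3) inferInstance := by
      simp
    have e2 : (⨆ i ∈ ({0, 1, 2} : Set (Fin 4)), MeasurableSpace.comap (ε i) Real.measurableSpace)
        = (MeasurableSpace.comap (ε 0) inferInstance
        ⊔ MeasurableSpace.comap (ε 1) inferInstance)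
        ⊔ MeasurableSpace.comap (ε 2) inferInstance := by
      rw [show ({0, 1, 2} : Set (Fin 4)) = insert 0 (insert 1 {2}) from rfl,
        iSup_insert, iSup_insert, iSup_singleton, sup_assoc]
    rwa [e1, e2] at h
  · rw [hfeq]
    have hTm : Measurable[MeasurableSpace.comap (semT w₁ ε) inferInstance] (semT w₁ ε) :=
      measurable_iff_comap_le.mpr le_rfl
    have hε3H : Measurable[MeasurableSpace.comap (ε 3) inferInstance] (ε 3) :=
      measurable_iff_comap_le.mpr le_rfl
    exact ((hTm.mono le_sup_left le_rfl).const_mul w₃).add (hε3H.mono le_sup_right le_rfl)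
  · show Measurable[(MeasurableSpace.comap (ε 0) inferInstance
        ⊔ MeasurableSpace.comap (ε 1) inferInstance)
        ⊔ MeasurableSpace.comap (ε 2) inferInstance] fun ω => (ε 0 ω, w₂ * ε 0 ω + ε 2 ω)
    exact (measurable_iff_comap_le.mpr (le_sup_left.trans le_sup_left)).prodMk
      (((measurable_iff_comap_le.mpr (le_sup_left.trans le_sup_left)).const_mul w₂).add
        (measurable_iff_comap_le.mpr le_sup_right))
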